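/- Let K ≥ 1 and let p ≥ 1 be a real number. Consider the nonlinear Hebbian dynamics with diagonal input correlations and combined exponent a + c = 1 on ℝ^K (after rescaling time by τ/σ): dJ_i/dt = J_i (1 − ∑_{j=1}^K |J_j|^p). Then: (1) every J* ∈ ℝ^K with ∑_{j=1}^K |J*_j|^p = 1 is an equilibrium; and (2) for every differentiable solution J : [0,∞) → ℝ^K with ∑_{j=1}^K |J_j(0)|^p > 0, the quantity L(t) = ∑_{j=1}^K |J_j(t)|^p satisfies dL/dt = p L (1 − L) and L(t) → 1 as t → ∞; hence the unit ℓ^p-sphere is an attracting set of equilibria. -/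

import Mathlib

open Filter Topology

lemma aux_abs_rpow {p : ℝ} (hp : 1 ≤ p) {f : ℝ → ℝ} {g t : ℝ}
    (hf : HasDerivAt f (f t * g) t) :
    HasDerivAt (fun s => |f s| ^ p) (p * |f t| ^ p * g) t := by
  have hp0 : (0:ℝ) < p := lt_of_lt_of_le one_pos hp
  rcases lt_trichotomy (f t) 0 with hneg | h0 | hpos
  · -- locally |f s| = -f s
    have hev : (fun s => |f s| ^ p) =ᶠ[𝓝 t] fun s => (-f s) ^ p := by
      have : ∀ᶠ s in 𝓝 t, f s < 0 :=
        hf.continuousAt.eventually_lt continuousAt_const hneg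
      filter_upwards [this] with s hs
      rw [abs_of_neg hs]
    have hbase : HasDerivAt (fun s => (-f s) ^ p)
        (p * (-f t) ^ (p - 1) * -(f t * g)) t :=
      HasDerivAt.comp (h₂ := fun x : ℝ => x ^ p) t (Real.hasDerivAt_rpow_const (p := p) (Or.inl (by linarith : -f t ≠ 0))) hf.neg
    have : HasDerivAt (fun s => (-f s) ^ p) (p * |f t| ^ p * g) t := by
      convert hbase using 1
      have h1 : (0:ℝ) < -f t := by linarith
      rw [abs_of_neg hneg]
      rw [show p = (p - 1) + 1 by ring, Real.rpow_add h1, Real.rpow_one]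
      ring_nf
    exact this.congr_of_eventuallyEq hev
  · -- f t = 0 : derivative is 0
    have hval : p * |f t| ^ p * g = 0 := by
      rw [h0]; simp [Real.zero_rpow hp0.ne']
    rw [hval]
    rw [hasDerivAt_iff_isLittleO]
    have hf0 : (fun s => f s) =o[𝓝 t] fun s => s - t := by
      have := hasDerivAt_iff_isLittleO.mp hf
      simpa [h0] using this
    have hO : (fun s => |f s| ^ p) =O[𝓝 t] fun s => f s := by
      apply Asymptotics.IsBigO.of_bound 1
      have hsm : ∀ᶠ s in 𝓝 t, |f s| < 1 := by
        have : ContinuousAt (fun s => |f s|) t := hf.continuousAt.abs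
        simpa [h0] using this.eventually_lt continuousAt_const (by simp [h0])
      filter_upwards [hsm] with s hs
      have habs : |f s| ^ p ≤ |f s| := by
        rcases eq_or_lt_of_le (abs_nonneg (f s)) with h | h
        · rw [← h, Real.zero_rpow hp0.ne']
        · calc |f s| ^ p ≤ |f s| ^ (1:ℝ) :=
                Real.rpow_le_rpow_of_exponent_ge h hs.le hp
            _ = |f s| := Real.rpow_one _
      have hpos : (0:ℝ) ≤ |f s| ^ p := Real.rpow_nonneg (abs_nonneg _) _
      simp only [Real.norm_eq_abs, one_mul, abs_abs]
      rw [abs_of_nonneg hpos]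
      exact habs
    have := hO.trans_isLittleO hf0
    simpa [h0, Real.zero_rpow hp0.ne'] using this
  · -- f t > 0
    have hev : (fun s => |f s| ^ p) =ᶠ[𝓝 t] fun s => (f s) ^ p := by
      have : ∀ᶠ s in 𝓝 t, 0 < f s :=
        continuousAt_const.eventually_lt hf.continuousAt hpos
      filter_upwards [this] with s hs
      rw [abs_of_pos hs]
    have hbase : HasDerivAt (fun s => (f s) ^ p)
        (p * (f t) ^ (p - 1) * (f t * g)) t :=
      (Real.hasDerivAt_rpow_const (p := p) (Or.inl hpos.ne')).comp t hf
    have : HasDerivAt (fun s => (f s) ^ p) (p * |f t| ^ p * g) t := by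
      convert hbase using 1
      rw [abs_of_pos hpos]
      rw [show p = (p - 1) + 1 by ring, Real.rpow_add hpos, Real.rpow_one]
      ring_nf
    exact this.congr_of_eventuallyEq hev

/-- Diagonal input correlations with `a + c = 1`: every point of the unit `ℓᵖ`-sphere
is an equilibrium, and along any solution the `ℓᵖ`-mass `L` satisfies the logistic
equation `dL/dt = p L (1 - L)` and converges to 1. -/
theorem stmt14 (K : ℕ) (hK : 1 ≤ K) (p : ℝ) (hp : 1 ≤ p) :
    (∀ Js : Fin K → ℝ, (∑ j, |Js j| ^ p) = 1 →
      ∀ i, Js i * (1 - ∑ j, |Js j| ^ p) = 0) ∧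
    (∀ J : ℝ → Fin K → ℝ,
      (∀ t ≥ (0 : ℝ), ∀ i, HasDerivAt (fun s => J s i)
        (J t i * (1 - ∑ j, |J t j| ^ p)) t) →
      0 < ∑ j, |J 0 j| ^ p →
      (∀ t ≥ (0 : ℝ), HasDerivAt (fun s => ∑ j, |J s j| ^ p)
        (p * (∑ j, |J t j| ^ p) * (1 - ∑ j, |J t j| ^ p)) t) ∧
      Tendsto (fun t => ∑ j, |J t j| ^ p) atTop (𝓝 1)) := by
  have hp0 : (0:ℝ) < p := lt_of_lt_of_le one_pos hp
  constructor
  · intro Js h i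
    rw [h]; ring
  · intro J hJ hL0
    set L : ℝ → ℝ := fun t => ∑ j, |J t j| ^ p with hLdef
    have hL : ∀ t ≥ (0:ℝ), HasDerivAt L (p * L t * (1 - L t)) t := by
      intro t ht
      have hs : HasDerivAt (fun s => ∑ j, |J s j| ^ p)
          (∑ j, p * |J t j| ^ p * (1 - L t)) t :=
        HasDerivAt.fun_sum fun j _ => aux_abs_rpow hp (hJ t ht j)
      convert hs using 1
      rw [← Finset.sum_mul, ← Finset.mul_sum]
    refine ⟨hL, ?_⟩
    have hL0' : 0 < L 0 := hL0
    set C : ℝ := 1 / L 0 - 1 with hCdef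
    set F : ℝ → ℝ := fun t => L t * (Real.exp (p * t) + C) - Real.exp (p * t) with hFdef
    have he : ∀ t : ℝ, HasDerivAt (fun s => Real.exp (p * s)) (p * Real.exp (p * t)) t := by
      intro t
      have := (Real.hasDerivAt_exp (p * t)).comp t ((hasDerivAt_id t).const_mul p)
      simpa [mul_comm, Function.comp_def] using this
    have hF' : ∀ t ≥ (0:ℝ), HasDerivAt F (p * (1 - L t) * F t) t := by
      intro t ht
      have h1 := ((hL t ht).mul ((he t).add_const C)).sub (he t)
      convert h1 using 1
      · rfl
      · rfl
      · rfl
      simp only [hFdef]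
      ring
    have hF0 : F 0 = 0 := by
      simp only [hFdef, hCdef]
      rw [mul_zero, Real.exp_zero]
      field_simp
      ring
    have hFzero : ∀ b ≥ (0:ℝ), F b = 0 := by
      intro b hb
      have hLc : ContinuousOn L (Set.Icc 0 b) := fun x hx =>
        ((hL x hx.1).continuousAt).continuousWithinAt
      obtain ⟨B, hB⟩ := (isCompact_Icc (a := (0:ℝ)) (b := b)).exists_bound_of_continuousOn
        (((continuousOn_const (c := (1:ℝ))).sub hLc).const_smul p)
      have hbound : ∀ x ∈ Set.Ico (0:ℝ) b, ‖p * (1 - L x) * F x‖ ≤ B * ‖F x‖ + 0 := by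
        intro x hx
        have hBx := hB x ⟨hx.1, hx.2.le⟩
        simp only [Pi.smul_apply, Pi.sub_apply, smul_eq_mul, Real.norm_eq_abs] at hBx
        rw [Real.norm_eq_abs, Real.norm_eq_abs, abs_mul, add_zero]
        exact mul_le_mul_of_nonneg_right hBx (abs_nonneg _)
      have key := norm_le_gronwallBound_of_norm_deriv_right_le
        (f := F) (f' := fun x => p * (1 - L x) * F x) (δ := 0) (K := B) (ε := 0)
        (a := 0) (b := b)
        (fun x hx => ((hF' x hx.1).continuousAt).continuousWithinAt)
        (fun x hx => (hF' x hx.1).hasDerivWithinAt)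
        (by simp [hF0]) hbound b (Set.right_mem_Icc.2 hb)
      rw [gronwallBound_ε0_δ0] at key
      exact norm_le_zero_iff.mp key
    have hCpos : 0 < 1 + C := by
      have h2 : 1 + C = 1 / L 0 := by rw [hCdef]; ring
      rw [h2]
      positivity
    have hform : ∀ t ≥ (0:ℝ), L t = Real.exp (p * t) / (Real.exp (p * t) + C) := by
      intro t ht
      have hden : 0 < Real.exp (p * t) + C := by
        have h1 : (1:ℝ) ≤ Real.exp (p * t) := by
          rw [← Real.exp_zero]
          exact Real.exp_le_exp.2 (by positivity)
        linarith
      have := hFzero t ht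
      simp only [hFdef] at this
      field_simp
      linarith [this]
    have h1 : Tendsto (fun t : ℝ => C * Real.exp (-(p * t))) atTop (𝓝 0) := by
      have hpt : Tendsto (fun t : ℝ => -(p * t)) atTop atBot := by
        apply tendsto_neg_atTop_atBot.comp
        exact Tendsto.const_mul_atTop hp0 tendsto_id
      have := Real.tendsto_exp_atBot.comp hpt
      simpa using this.const_mul C
    have h2 : Tendsto (fun t : ℝ => (1 + C * Real.exp (-(p * t)))⁻¹) atTop (𝓝 1) := by
      have := (tendsto_const_nhds.add h1).inv₀ (by norm_num : (1:ℝ) + 0 ≠ 0)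
      simpa using this
    apply h2.congr'
    filter_upwards [eventually_ge_atTop (0:ℝ)] with t ht
    have hden : 0 < Real.exp (p * t) + C := by
      have hh : (1:ℝ) ≤ Real.exp (p * t) := by
        rw [← Real.exp_zero]
        exact Real.exp_le_exp.2 (by positivity)
      linarith
    have hexp : 0 < Real.exp (p * t) := Real.exp_pos _
    have := hform t ht
    show (1 + C * Real.exp (-(p * t)))⁻¹ = L t
    rw [this, Real.exp_neg]
    field_simp
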